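/- arXiv:1703.00172 — 2 statements merged into one kernel-verified Lean document; each statement's English description precedes it below -/
import Mathlib

section
/- Let ψ(t) = (((h⁻¹)')⁻¹((α/(βC))/(t + k₀)))^{1/β}, where h⁻¹ is C², increasing, strictly convex on (0, r₀] with (h⁻¹)'(s) ≤ α·s·(h⁻¹)''(s). Then ψ'(t) ≥ -(α/β)·ψ(t)/(t + k₀) for all t ≥ 0. -/
open Real Set Filter Topology

/-- Derivative lower bound ψ'(t) ≥ -(α/β)·ψ(t)/(t+k₀) for
ψ(t) = (((h⁻¹)')⁻¹((α/(βC))/(t+k₀)))^{1/β}. -/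
theorem stmt_1
    (hinv G : ℝ → ℝ) (r₀ α C β k₀ : ℝ)
    (hr₀ : 0 < r₀) (hr₀1 : r₀ ≤ 1) (hα : 0 < α) (hC : 0 < C) (hβ : 1 ≤ β)
    (hk₀ : 0 < k₀)
    (hsmooth : ContDiffOn ℝ 2 hinv (Ioc 0 r₀))
    (hmono : StrictMonoOn hinv (Ioc 0 r₀))
    (hconv : StrictConvexOn ℝ (Ioc 0 r₀) hinv)
    (hineq : ∀ s ∈ Ioc 0 r₀, deriv hinv s ≤ α * s * deriv (deriv hinv) s)
    -- G is the inverse function of (h⁻¹)'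
    (hGleft : ∀ s ∈ Ioc 0 r₀, G (deriv hinv s) = s)
    (hGright : ∀ x ∈ deriv hinv '' Ioc 0 r₀, deriv hinv (G x) = x)
    -- the argument lies in the range of (h⁻¹)'
    (hrange : ∀ t ≥ (0:ℝ), α / (β * C) / (t + k₀) ∈ deriv hinv '' Ioc 0 r₀) :
    ∀ t ≥ 0,
      deriv (fun t => (G (α / (β * C) / (t + k₀))) ^ (1 / β)) t ≥
        -(α / β) * (G (α / (β * C) / (t + k₀))) ^ (1 / β) / (t + k₀) := by
  intro t ht
  have hβ0 : (0:ℝ) < β := lt_of_lt_of_le one_pos hβ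
  have hc : (0:ℝ) < α / (β * C) := div_pos hα (mul_pos hβ0 hC)
  have htk : (0:ℝ) < t + k₀ := by linarith
  set c : ℝ := α / (β * C) with hc_def
  set a : ℝ := c / (t + k₀) with ha_def
  have ha : 0 < a := div_pos hc htk
  -- the point s = G a
  obtain ⟨s, hsD, hFs⟩ := hrange t ht
  have hGa : G a = s := by rw [ha_def, ← hFs]; exact hGleft s hsD
  have hs0 : 0 < s := hsD.1
  have hsr : s ≤ r₀ := hsD.2
  -- differentiability facts
  have diff_Ioo : ∀ x ∈ Ioo 0 r₀, DifferentiableAt ℝ hinv x := by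
    intro x hx
    have h1 : DifferentiableOn ℝ hinv (Ioo 0 r₀) :=
      (hsmooth.differentiableOn (by norm_num)).mono Ioo_subset_Ioc_self
    exact h1.differentiableAt (isOpen_Ioo.mem_nhds hx)
  have diff_ne : ∀ (f : ℝ → ℝ) (y : ℝ), deriv f y ≠ 0 → DifferentiableAt ℝ f y := by
    intro f y h
    by_contra hcon
    exact h (deriv_zero_of_not_differentiableAt hcon)
  have key_mono : ∀ x ∈ Ioc 0 r₀, ∀ y ∈ Ioc 0 r₀, x < y → DifferentiableAt ℝ hinv y →
      deriv hinv x < deriv hinv y := by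
    intro x hx y hy hxy hdy
    have hxIoo : x ∈ Ioo 0 r₀ := ⟨hx.1, lt_of_lt_of_le hxy hy.2⟩
    exact (hconv.deriv_lt_slope hx hy hxy (diff_Ioo x hxIoo)).trans
      (hconv.slope_lt_deriv hx hy hxy hdy)
  -- every x ∈ (0, a] is in the range of deriv hinv
  have himg : ∀ x : ℝ, 0 < x → x ≤ a → x ∈ deriv hinv '' Ioc 0 r₀ := by
    intro x hx0 hxa
    have hca : c / a = t + k₀ := by
      rw [ha_def]; field_simp
    have h1 : c / a ≤ c / x := div_le_div_of_nonneg_left hc.le hx0 hxa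
    have ht' : 0 ≤ c / x - k₀ := by rw [hca] at h1; linarith
    have := hrange (c / x - k₀) ht'
    have hxx : c / (c / x - k₀ + k₀) = x := by
      rw [show c / x - k₀ + k₀ = c / x from by ring, div_div_eq_mul_div,
        mul_div_cancel_left₀ _ hc.ne']
    rwa [hxx] at this
  have hGx : ∀ x : ℝ, 0 < x → x ≤ a → G x ∈ Ioc 0 r₀ ∧ deriv hinv (G x) = x := by
    intro x hx0 hxa
    obtain ⟨y, hyD, hFy⟩ := himg x hx0 hxa
    have : G x = y := by rw [← hFy]; exact hGleft y hyD
    refine ⟨this ▸ hyD, ?_⟩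
    rw [this, hFy]
  -- second derivative at s is positive
  set m : ℝ := deriv (deriv hinv) s with hm_def
  have hFsa : deriv hinv s = a := hFs
  have hm : 0 < m := by
    have h1 := hineq s hsD
    rw [hFsa] at h1
    nlinarith [mul_pos hα hs0]
  have hdFs : HasDerivAt (deriv hinv) m s := (diff_ne _ s hm.ne').hasDerivAt
  have hds : DifferentiableAt ℝ hinv s := by
    apply diff_ne; rw [hFsa]; exact ha.ne'
  -- continuity of G within (0, a) at a
  have htend : Tendsto G (𝓝[Ioo 0 a] a) (𝓝 s) := by
    rw [Metric.tendsto_nhds]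
    intro ε hε
    set ε' : ℝ := min (ε/2) (s/2) with hε'_def
    have hε'0 : 0 < ε' := lt_min (by linarith) (by linarith)
    have hε's : ε' < s := lt_of_le_of_lt (min_le_right _ _) (by linarith)
    have hε'ε : ε' < ε := lt_of_le_of_lt (min_le_left _ _) (by linarith)
    set p : ℝ := s - ε' with hp_def
    have hpIoo : p ∈ Ioo 0 r₀ := ⟨by linarith, by linarith⟩
    have hpD : p ∈ Ioc 0 r₀ := Ioo_subset_Ioc_self hpIoo
    have hb1 : deriv hinv p < a := by
      have := key_mono p hpD s hsD (by linarith) hds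
      rwa [hFsa] at this
    -- eventually x > deriv hinv p
    have hev1 : ∀ᶠ x in 𝓝[Ioo 0 a] a, deriv hinv p < x :=
      eventually_nhdsWithin_of_eventually_nhds (eventually_gt_nhds hb1)
    have hev2 : ∀ᶠ x in 𝓝[Ioo 0 a] a, x ∈ Ioo 0 a := eventually_mem_nhdsWithin
    -- lower bound on G x
    have lower : ∀ x ∈ Ioo 0 a, deriv hinv p < x → p < G x := by
      intro x hx hpx
      obtain ⟨hGxD, hFGx⟩ := hGx x hx.1 hx.2.le
      by_contra hcon
      push_neg at hcon
      rcases lt_or_eq_of_le hcon with h | h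
      · have := key_mono (G x) hGxD p hpD h (diff_Ioo p hpIoo)
        rw [hFGx] at this
        linarith
      · rw [← h] at hpx; rw [hFGx] at hpx; linarith
    -- upper bound on G x
    have upper : ∀ᶠ x in 𝓝[Ioo 0 a] a, G x < s + ε' := by
      rcases eq_or_lt_of_le hsr with hsr₀ | hslt
      · filter_upwards [hev2] with x hx
        have h := (hGx x hx.1 hx.2.le).1.2
        rw [← hsr₀] at h
        linarith
      · set ε'' : ℝ := min ε' ((r₀ - s)/2) with hε''_def
        have hε''0 : 0 < ε'' := lt_min hε'0 (by linarith)
        set q : ℝ := s + ε'' with hq_def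
        have hqIoo : q ∈ Ioo 0 r₀ := ⟨by linarith, by
          have : ε'' ≤ (r₀ - s)/2 := min_le_right _ _
          simp only [hq_def]; linarith⟩
        have hqD : q ∈ Ioc 0 r₀ := Ioo_subset_Ioc_self hqIoo
        have hb2 : a < deriv hinv q := by
          have := key_mono s hsD q hqD (by linarith) (diff_Ioo q hqIoo)
          rwa [hFsa] at this
        filter_upwards [hev2] with x hx
        obtain ⟨hGxD, hFGx⟩ := hGx x hx.1 hx.2.le
        by_contra hcon
        push_neg at hcon
        have hqGx : q ≤ G x := by
          have : ε'' ≤ ε' := min_le_left _ _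
          simp only [hq_def]; linarith
        rcases lt_or_eq_of_le hqGx with h | h
        · have hdGx : DifferentiableAt ℝ hinv (G x) := by
            apply diff_ne; rw [hFGx]; exact hx.1.ne'
          have := key_mono q hqD (G x) hGxD h hdGx
          rw [hFGx] at this
          have := hx.2
          linarith
        · rw [h, hFGx] at hb2
          exact absurd hx.2 (by linarith)
    filter_upwards [hev1, hev2, upper] with x h1 h2 h3
    have h4 := lower x h2 h1
    rw [Real.dist_eq, abs_lt]
    constructor <;> simp only [hp_def] at h4 <;> linarith
  -- slope of deriv hinv tends to m
  have hFslope : Tendsto (slope (deriv hinv) s) (𝓝[Ioc 0 r₀ \ {s}] s) (𝓝 m) :=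
    hasDerivWithinAt_iff_tendsto_slope.1 (hdFs.hasDerivWithinAt (s := Ioc 0 r₀))
  -- G maps into Ioc 0 r₀ \ {s}
  have htend' : Tendsto G (𝓝[Ioo 0 a] a) (𝓝[Ioc 0 r₀ \ {s}] s) := by
    rw [tendsto_nhdsWithin_iff]
    refine ⟨htend, ?_⟩
    filter_upwards [eventually_mem_nhdsWithin] with x hx
    obtain ⟨hGxD, hFGx⟩ := hGx x hx.1 hx.2.le
    refine ⟨hGxD, ?_⟩
    intro hcon
    rw [mem_singleton_iff] at hcon
    rw [hcon, hFsa] at hFGx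
    exact hx.2.ne' hFGx
  -- derivative of G within Ioc 0 a at a
  have hIocd : Ioc 0 a \ {a} = Ioo 0 a := by
    ext x
    simp only [mem_diff, mem_Ioc, mem_Ioo, mem_singleton_iff]
    constructor
    · rintro ⟨⟨h1, h2⟩, h3⟩; exact ⟨h1, lt_of_le_of_ne h2 h3⟩
    · rintro ⟨h1, h2⟩; exact ⟨⟨h1, h2.le⟩, h2.ne⟩
  have hGderiv : HasDerivWithinAt G m⁻¹ (Ioc 0 a) a := by
    rw [hasDerivWithinAt_iff_tendsto_slope, hIocd]
    have hcomp : Tendsto (fun x => (slope (deriv hinv) s (G x))⁻¹) (𝓝[Ioo 0 a] a) (𝓝 m⁻¹) :=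
      (hFslope.comp htend').inv₀ hm.ne'
    refine hcomp.congr' ?_
    filter_upwards [eventually_mem_nhdsWithin] with x hx
    obtain ⟨hGxD, hFGx⟩ := hGx x hx.1 hx.2.le
    have hxa : x ≠ a := hx.2.ne
    have hGxs : G x ≠ s := by
      intro hcon
      rw [hcon, hFsa] at hFGx
      exact hxa hFGx.symm
    rw [slope_def_field, slope_def_field, hFGx, hFsa, hGa, inv_div]
  -- derivative of the inner map t ↦ c / (t + k₀)
  have hu : HasDerivAt (fun x : ℝ => c / (x + k₀)) (-(a / (t + k₀))) t := by
    have h1 : HasDerivAt (fun x : ℝ => x + k₀) 1 t := (hasDerivAt_id t).add_const k₀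
    have h2 : HasDerivAt (fun x : ℝ => (x + k₀)⁻¹) (-1 / (t + k₀)^2) t := h1.inv htk.ne'
    have h3 := h2.const_mul c
    have hval : c * (-1 / (t + k₀)^2) = -(a / (t + k₀)) := by
      rw [ha_def]
      have hX : (t + k₀) ≠ 0 := htk.ne'
      field_simp
    rw [hval] at h3
    have heq : (fun x : ℝ => c / (x + k₀)) = fun x : ℝ => c * (x + k₀)⁻¹ := by
      funext x; rw [div_eq_mul_inv]
    rw [heq]
    exact h3
  have hmaps : MapsTo (fun x : ℝ => c / (x + k₀)) (Ici t) (Ioc 0 a) := by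
    intro x hx
    simp only [mem_Ici] at hx
    have hxk : 0 < x + k₀ := by linarith
    constructor
    · positivity
    · exact div_le_div_of_nonneg_left hc.le htk (by linarith)
  have hGu : HasDerivWithinAt (fun x : ℝ => G (c / (x + k₀))) (m⁻¹ * (-(a / (t + k₀))))
      (Ici t) t := by
    exact HasDerivWithinAt.comp t (by simpa [← ha_def] using hGderiv) hu.hasDerivWithinAt hmaps
  -- rpow composition
  have hrpow : HasDerivAt (fun y : ℝ => y ^ (1/β)) ((1/β) * s ^ (1/β - 1)) s :=
    Real.hasDerivAt_rpow_const (Or.inl hs0.ne')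
  have hpt : G (c / (t + k₀)) = s := hGa
  have hrpow' : HasDerivAt (fun y : ℝ => y ^ (1/β)) ((1/β) * s ^ (1/β - 1))
      (G (c / (t + k₀))) := by rw [hpt]; exact hrpow
  have hψ : HasDerivWithinAt (fun x : ℝ => (G (c / (x + k₀))) ^ (1/β))
      ((1/β) * s ^ (1/β - 1) * (m⁻¹ * (-(a / (t + k₀))))) (Ici t) t := by
    have := hrpow'.comp_hasDerivWithinAt t hGu
    exact this
  set P : ℝ := s ^ (1/β - 1) with hP_def
  have hP : 0 < P := Real.rpow_pos_of_pos hs0 _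
  have hQ : s ^ (1/β) = P * s := by
    have h := Real.rpow_add hs0 (1/β - 1) 1
    rw [Real.rpow_one] at h
    rw [hP_def, ← h]
    ring_nf
  -- the key inequality
  have hkey : m⁻¹ * a ≤ α * s := by
    have h1 := hineq s hsD
    rw [hFsa] at h1
    rw [inv_mul_le_iff₀ hm]
    nlinarith
  -- conclude
  have hgoal_eq : (fun x : ℝ => (G (α / (β * C) / (x + k₀))) ^ (1/β))
      = (fun x : ℝ => (G (c / (x + k₀))) ^ (1/β)) := rfl
  have hRHS : -(α / β) * (G (α / (β * C) / (t + k₀))) ^ (1 / β) / (t + k₀)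
      = -(α * (P * s) / β / (t + k₀)) := by
    have hGas : G (α / (β * C) / (t + k₀)) = s := hGa
    rw [hGas, hQ]
    ring
  rw [hgoal_eq, hRHS]
  by_cases hd : DifferentiableAt ℝ (fun x : ℝ => (G (c / (x + k₀))) ^ (1/β)) t
  · have h1 := hψ.derivWithin (uniqueDiffOn_Ici t t self_mem_Ici)
    have h2 := hd.hasDerivAt.hasDerivWithinAt.derivWithin (uniqueDiffOn_Ici t t self_mem_Ici)
    rw [← h2, h1]
    have hv : (1/β) * P * (m⁻¹ * (-(a / (t + k₀)))) = -(P * (m⁻¹ * a) / β / (t + k₀)) := by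
      ring
    rw [ge_iff_le, hv, neg_le_neg_iff]
    have h4 : P * (m⁻¹ * a) ≤ α * (P * s) := by nlinarith [hkey, hP.le]
    exact div_le_div_of_nonneg_right (div_le_div_of_nonneg_right h4 hβ0.le) htk.le
  · rw [deriv_zero_of_not_differentiableAt hd]
    have h1 : 0 ≤ α * (P * s) / β / (t + k₀) := by positivity
    linarith
end

section
/- Let φ solve φ' = (ε₀/(2C₁))·φ·(h⁻¹)'(1/φ^β) with 0 < φ(0)^{-β} ≤ r₀ and β > 1, where h⁻¹ is strictly convex C¹ on [0, r₀] with h⁻¹(0) = (h⁻¹)'(0) = 0 and h⁻¹ ≥ 0, and φ(t) → ∞. Then (ε₀/(2C₁))·∫₀^∞ φ(s)·H*( (2C₁ φ'(s))/(ε₀ φ(s)) ) ds ≤ φ(0)^{1−β}/(β − 1), where H* is the convex conjugate of H (H = h⁻¹ on ℝ₊, +∞ on ℝ₋). -/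
open Real Set Filter MeasureTheory Topology

private lemma deriv_nonpos_right {φ : ℝ → ℝ} {u z d : ℝ} (huz : u < z)
    (hd : HasDerivAt φ d u) (h : ∀ r ∈ Ioc u z, φ r ≤ φ u) : d ≤ 0 := by
  have T : Tendsto (slope φ u) (𝓝[>] u) (𝓝 d) :=
    (hasDerivAt_iff_tendsto_slope.1 hd).mono_left
      (nhdsWithin_mono _ (fun r hr => ne_of_gt hr))
  refine le_of_tendsto T ?_
  filter_upwards [Ioc_mem_nhdsGT_of_mem ⟨le_rfl, huz⟩] with r hr
  rw [slope_def_field]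
  exact div_nonpos_iff.2 (Or.inr ⟨sub_nonpos.2 (h r hr), sub_nonneg.2 hr.1.le⟩)

private lemma deriv_nonneg_right {φ : ℝ → ℝ} {u z d : ℝ} (huz : u < z)
    (hd : HasDerivAt φ d u) (h : ∀ r ∈ Ioc u z, φ u ≤ φ r) : 0 ≤ d := by
  have T : Tendsto (slope φ u) (𝓝[>] u) (𝓝 d) :=
    (hasDerivAt_iff_tendsto_slope.1 hd).mono_left
      (nhdsWithin_mono _ (fun r hr => ne_of_gt hr))
  refine ge_of_tendsto T ?_
  filter_upwards [Ioc_mem_nhdsGT_of_mem ⟨le_rfl, huz⟩] with r hr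
  rw [slope_def_field]
  exact div_nonneg (sub_nonneg.2 (h r hr)) (sub_nonneg.2 hr.1.le)

private lemma deriv_nonneg_left {φ : ℝ → ℝ} {u z d : ℝ} (hzu : z < u)
    (hd : HasDerivAt φ d u) (h : ∀ r ∈ Ico z u, φ r ≤ φ u) : 0 ≤ d := by
  have T : Tendsto (slope φ u) (𝓝[<] u) (𝓝 d) :=
    (hasDerivAt_iff_tendsto_slope.1 hd).mono_left
      (nhdsWithin_mono _ (fun r hr => ne_of_lt hr))
  refine ge_of_tendsto T ?_
  filter_upwards [Ico_mem_nhdsLT_of_mem ⟨hzu, le_rfl⟩] with r hr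
  rw [slope_def_field]
  exact div_nonneg_of_nonpos (sub_nonpos.2 (h r hr)) (sub_nonpos.2 hr.2.le)

private lemma auton_mono (φ F : ℝ → ℝ)
    (hODE : ∀ t ≥ (0:ℝ), HasDerivAt φ (F (φ t)) t)
    (htend : Tendsto φ atTop atTop) :
    ∀ s t : ℝ, 0 ≤ s → s ≤ t → φ s ≤ φ t := by
  intro s t hs hst
  by_contra hlt
  push_neg at hlt
  obtain ⟨v, hv1, hv2⟩ : ∃ v, φ s ≤ φ v ∧ t ≤ v :=
    ((htend.eventually_ge_atTop (φ s)).and (eventually_ge_atTop t)).exists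
  have hsv : s ≤ v := hst.trans hv2
  have hcont : ContinuousOn φ (Ici 0) := fun r hr => ((hODE r hr).continuousAt).continuousWithinAt
  have hsub : Icc s v ⊆ Ici 0 := fun r hr => le_trans hs hr.1
  have hcsv : ContinuousOn φ (Icc s v) := hcont.mono hsub
  obtain ⟨tm, htm, hmin'⟩ := isCompact_Icc.exists_isMinOn (nonempty_Icc.2 hsv) hcsv
  have hmin : ∀ r ∈ Icc s v, φ tm ≤ φ r := fun r hr => hmin' hr
  have hμlt : φ tm < φ s := lt_of_le_of_lt (hmin t ⟨hst, hv2⟩) hlt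
  -- construct last down-crossing of level ℓ before tm
  have U : ∀ ℓ, φ tm < ℓ → ℓ ≤ φ s →
      ∃ u ∈ Ico s tm, φ u = ℓ ∧ ∀ r ∈ Ioc u tm, φ r < ℓ := by
    intro ℓ hℓ1 hℓ2
    have htm0 : s ≤ tm := htm.1
    have hA : IsClosed (Icc s tm ∩ φ ⁻¹' (Ici ℓ)) :=
      (hcsv.mono (Icc_subset_Icc le_rfl htm.2)).preimage_isClosed_of_isClosed
        isClosed_Icc isClosed_Ici
    have hAne : (Icc s tm ∩ φ ⁻¹' (Ici ℓ)).Nonempty := ⟨s, ⟨le_rfl, htm0⟩, hℓ2⟩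
    have hAbdd : BddAbove (Icc s tm ∩ φ ⁻¹' (Ici ℓ)) :=
      (bddAbove_Icc).mono inter_subset_left
    set u := sSup (Icc s tm ∩ φ ⁻¹' (Ici ℓ)) with hu
    have huA : u ∈ Icc s tm ∩ φ ⁻¹' (Ici ℓ) := hA.csSup_mem hAne hAbdd
    have hlater : ∀ r ∈ Ioc u tm, φ r < ℓ := by
      intro r hr
      by_contra hge
      push_neg at hge
      have : r ≤ u := le_csSup hAbdd ⟨⟨huA.1.1.trans hr.1.le, hr.2⟩, hge⟩
      exact absurd hr.1 (not_lt.2 this)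
    have hune : u ≠ tm := by
      intro hEq
      have := huA.2
      rw [hEq] at this
      exact absurd this (not_le.2 hℓ1)
    have hutm : u < tm := lt_of_le_of_ne huA.1.2 hune
    have hφu : φ u = ℓ := by
      refine le_antisymm ?_ huA.2
      have hcu : Tendsto φ (𝓝[>] u) (𝓝 (φ u)) :=
        ((hODE u (hs.trans huA.1.1)).continuousAt).continuousWithinAt
      refine le_of_tendsto hcu ?_
      filter_upwards [Ioc_mem_nhdsGT_of_mem ⟨le_rfl, hutm⟩] with r hr
      exact (hlater r hr).le
    exact ⟨u, ⟨huA.1.1, hutm⟩, hφu, hlater⟩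
  -- construct first up-crossing of level ℓ after tm
  have W : ∀ ℓ, φ tm < ℓ → ℓ ≤ φ v →
      ∃ w ∈ Ioc tm v, φ w = ℓ ∧ ∀ r ∈ Ico tm w, φ r < ℓ := by
    intro ℓ hℓ1 hℓ2
    have hB : IsClosed (Icc tm v ∩ φ ⁻¹' (Ici ℓ)) :=
      (hcsv.mono (Icc_subset_Icc htm.1 le_rfl)).preimage_isClosed_of_isClosed
        isClosed_Icc isClosed_Ici
    have hBne : (Icc tm v ∩ φ ⁻¹' (Ici ℓ)).Nonempty := ⟨v, ⟨htm.2, le_rfl⟩, hℓ2⟩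
    have hBbdd : BddBelow (Icc tm v ∩ φ ⁻¹' (Ici ℓ)) :=
      (bddBelow_Icc).mono inter_subset_left
    set w := sInf (Icc tm v ∩ φ ⁻¹' (Ici ℓ)) with hw
    have hwB : w ∈ Icc tm v ∩ φ ⁻¹' (Ici ℓ) := hB.csInf_mem hBne hBbdd
    have hbefore : ∀ r ∈ Ico tm w, φ r < ℓ := by
      intro r hr
      by_contra hge
      push_neg at hge
      have : w ≤ r := csInf_le hBbdd ⟨⟨hr.1, hr.2.le.trans hwB.1.2⟩, hge⟩
      exact absurd hr.2 (not_lt.2 this)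
    have hwne : tm ≠ w := by
      intro hEq
      have := hwB.2
      rw [← hEq] at this
      exact absurd this (not_le.2 hℓ1)
    have htmw : tm < w := lt_of_le_of_ne hwB.1.1 hwne
    have hφw : φ w = ℓ := by
      refine le_antisymm ?_ hwB.2
      have hcw : Tendsto φ (𝓝[<] w) (𝓝 (φ w)) :=
        ((hODE w (hs.trans (htm.1.trans hwB.1.1))).continuousAt).continuousWithinAt
      refine le_of_tendsto hcw ?_
      filter_upwards [Ico_mem_nhdsLT_of_mem ⟨htmw, le_rfl⟩] with r hr
      exact (hbefore r hr).le
    exact ⟨w, ⟨htmw, hwB.1.2⟩, hφw, hbefore⟩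
  -- F vanishes on intermediate levels
  have Z : ∀ ℓ, φ tm < ℓ → ℓ < φ s → F ℓ = 0 := by
    intro ℓ hℓ1 hℓ2
    obtain ⟨u, hu, hφu, hlater⟩ := U ℓ hℓ1 hℓ2.le
    obtain ⟨w, hw, hφw, hbefore⟩ := W ℓ hℓ1 (hℓ2.le.trans hv1)
    have hdu : HasDerivAt φ (F ℓ) u := by
      have := hODE u (hs.trans hu.1)
      rwa [hφu] at this
    have hdw : HasDerivAt φ (F ℓ) w := by
      have := hODE w (hs.trans (htm.1.trans hw.1.le))
      rwa [hφw] at this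
    have h1 : F ℓ ≤ 0 :=
      deriv_nonpos_right hu.2 hdu (fun r hr => by rw [hφu]; exact (hlater r hr).le)
    have h2 : 0 ≤ F ℓ :=
      deriv_nonneg_left hw.1 hdw (fun r hr => by rw [hφw]; exact (hbefore r hr).le)
    linarith
  -- constancy contradiction at level ℓ₀
  set ℓ₀ := (φ tm + φ s) / 2 with hℓ₀
  have hℓ₀1 : φ tm < ℓ₀ := by rw [hℓ₀]; linarith
  have hℓ₀2 : ℓ₀ < φ s := by rw [hℓ₀]; linarith
  obtain ⟨u, hu, hφu, hlater⟩ := U ℓ₀ hℓ₀1 hℓ₀2.le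
  obtain ⟨w, hw, hφw, hbefore⟩ := W ℓ₀ hℓ₀1 (hℓ₀2.le.trans hv1)
  have huw : u ≤ w := hu.2.le.trans hw.1.le
  have hconst : ∀ x ∈ Icc u w, φ x = φ u := by
    apply constant_of_has_deriv_right_zero
      (hcsv.mono (Icc_subset_Icc hu.1 hw.2))
    intro x hx
    have hx0 : (0:ℝ) ≤ x := hs.trans (hu.1.trans hx.1)
    have hdx := hODE x hx0
    have hxle : φ x ≤ ℓ₀ := by
      rcases eq_or_lt_of_le hx.1 with hEq | hlt'
      · rw [← hEq, hφu]
      · rcases le_or_gt x tm with hxtm | hxtm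
        · exact (hlater x ⟨hlt', hxtm⟩).le
        · exact (hbefore x ⟨hxtm.le, hx.2⟩).le
    have hxge : φ tm ≤ φ x :=
      hmin x ⟨hu.1.trans hx.1, hx.2.le.trans hw.2⟩
    have hF0 : F (φ x) = 0 := by
      rcases eq_or_lt_of_le hxge with hEq | hlt'
      · have hxu : u < x := by
          rcases eq_or_lt_of_le hx.1 with hEq2 | h
          · exfalso
            have : φ tm = ℓ₀ := hEq.trans (by rw [← hEq2]; exact hφu)
            linarith
          · exact h
        have hxs : s < x := lt_of_le_of_lt hu.1 hxu
        have hxv : x < v := lt_of_lt_of_le hx.2 hw.2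
        have hlocal : IsLocalMin φ x := by
          filter_upwards [Icc_mem_nhds hxs hxv] with r hr
          rw [← hEq]
          exact hmin r hr
        have := hlocal.deriv_eq_zero
        rwa [hdx.deriv] at this
      · exact Z (φ x) hlt' (lt_of_le_of_lt hxle hℓ₀2)
    rw [hF0] at hdx
    exact hdx.hasDerivWithinAt
  have := hconst tm ⟨hu.2.le, hw.1.le⟩
  rw [hφu] at this
  linarith

/-- Weighted integral bound:
(ε₀/(2C₁))·∫₀^∞ φ(s)·H*((2C₁φ'(s))/(ε₀φ(s))) ds ≤ φ(0)^{1−β}/(β−1). -/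
theorem stmt_10
    (hinv φ : ℝ → ℝ) (r₀ ε₀ C₁ β : ℝ)
    (hr₀ : 0 < r₀) (hε₀ : 0 < ε₀) (hC₁ : 0 < C₁) (hβ : 1 < β)
    (hC1 : ContDiffOn ℝ 1 hinv (Icc 0 r₀))
    (hconv : StrictConvexOn ℝ (Icc 0 r₀) hinv)
    (h0 : hinv 0 = 0) (hd0 : deriv hinv 0 = 0)
    (hnonneg : ∀ s ∈ Icc 0 r₀, 0 ≤ hinv s)
    (hODE : ∀ t ≥ (0:ℝ),
      HasDerivAt φ (ε₀ / (2 * C₁) * φ t * deriv hinv (1 / φ t ^ β)) t)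
    (hφ0 : 0 < (φ 0) ^ (-β)) (hφ0r : (φ 0) ^ (-β) ≤ r₀)
    (htend : Tendsto φ atTop atTop)
    (Hstar : ℝ → ℝ)
    (hHstar : ∀ x, Hstar x = sSup ((fun y => x * y - hinv y) '' Icc 0 r₀)) :
    ε₀ / (2 * C₁) *
        ∫ s in Ioi (0:ℝ), φ s * Hstar (2 * C₁ * deriv φ s / (ε₀ * φ s)) ≤
      (φ 0) ^ (1 - β) / (β - 1) := by
  have hc : (0:ℝ) < ε₀ / (2 * C₁) := by positivity
  have Mono : ∀ s t : ℝ, 0 ≤ s → s ≤ t → φ s ≤ φ t :=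
    auton_mono φ (fun y => ε₀ / (2 * C₁) * y * deriv hinv (1 / y ^ β))
      (fun t ht => hODE t ht) htend
  have hcont : ContinuousOn φ (Ici 0) :=
    fun r hr => ((hODE r hr).continuousAt).continuousWithinAt
  have hFnonneg : ∀ t, 0 ≤ t →
      0 ≤ ε₀ / (2 * C₁) * φ t * deriv hinv (1 / φ t ^ β) := by
    intro t ht
    exact deriv_nonneg_right (lt_add_one t) (hODE t ht)
      (fun r hr => Mono t r ht hr.1.le)
  have hattain : ∀ y, φ 0 ≤ y → ∃ r, 0 ≤ r ∧ φ r = y := by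
    intro y hy
    obtain ⟨T, hT1, hT2⟩ : ∃ T, y ≤ φ T ∧ (0:ℝ) ≤ T :=
      ((htend.eventually_ge_atTop y).and (eventually_ge_atTop 0)).exists
    obtain ⟨r, hr, hrfy⟩ :=
      intermediate_value_Icc hT2 (hcont.mono (fun r hr => hr.1)) ⟨hy, hT1⟩
    exact ⟨r, hr.1, hrfy⟩
  -- φ 0 is positive
  have hφ0pos : 0 < φ 0 := by
    rcases lt_trichotomy (φ 0) 0 with hneg | hzero | hpos
    · exfalso
      have hcos : 0 < Real.cos (β * π) := by
        rw [Real.rpow_def_of_neg hneg,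
          show (-β) * π = -(β * π) by ring, Real.cos_neg] at hφ0
        nlinarith [Real.exp_pos (Real.log (φ 0) * -β)]
      have key : ∀ ℓ, φ 0 < ℓ → ℓ < 0 → deriv hinv (1 / ℓ ^ β) = 0 := by
        intro ℓ hℓ1 hℓ2
        have hℓpow : 0 < ℓ ^ β := by
          rw [Real.rpow_def_of_neg hℓ2]
          exact mul_pos (Real.exp_pos _) hcos
        have hξpos : 0 < 1 / ℓ ^ β := by positivity
        obtain ⟨r, hr0, hrℓ⟩ := hattain ℓ hℓ1.le
        have h1 := hFnonneg r hr0
        rw [hrℓ] at h1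
        have hβ0 : β ≠ 0 := by linarith
        have hD1 : deriv hinv (1 / ℓ ^ β) ≤ 0 := by
          by_contra hD
          push_neg at hD
          have hcl : ε₀ / (2 * C₁) * ℓ < 0 := mul_neg_of_pos_of_neg hc hℓ2
          exact absurd h1 (not_le.2 (mul_neg_of_neg_of_pos hcl hD))
        set ℓ₂ := (1 / ℓ ^ β) ^ (-1/β) with hℓ₂def
        have hℓ₂pos : 0 < ℓ₂ := Real.rpow_pos_of_pos hξpos _
        have hℓ₂pow : 1 / ℓ₂ ^ β = 1 / ℓ ^ β := by
          rw [hℓ₂def, ← Real.rpow_mul hξpos.le,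
            show (-1/β) * β = -1 by field_simp,
            Real.rpow_neg hξpos.le, Real.rpow_one]
          rw [one_div, inv_inv]
        obtain ⟨r₂, hr₂0, hr₂ℓ⟩ := hattain ℓ₂ (by linarith : φ 0 ≤ ℓ₂)
        have h2 := hFnonneg r₂ hr₂0
        rw [hr₂ℓ, hℓ₂pow] at h2
        have hD2 : 0 ≤ deriv hinv (1 / ℓ ^ β) := by
          by_contra hD
          push_neg at hD
          have hcl2 : 0 < ε₀ / (2 * C₁) * ℓ₂ := mul_pos hc hℓ₂pos
          exact absurd h2 (not_le.2 (mul_neg_of_pos_of_neg hcl2 hD))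
        exact le_antisymm hD1 hD2
      obtain ⟨t₁, ht₁0, ht₁⟩ := hattain (φ 0 / 2) (by linarith)
      obtain ⟨t₂, ht₂0, ht₂⟩ := hattain (φ 0 / 4) (by linarith)
      have ht12 : t₁ ≤ t₂ := by
        by_contra hlt
        push_neg at hlt
        have := Mono t₂ t₁ ht₂0 hlt.le
        rw [ht₁, ht₂] at this
        linarith
      have hconst : ∀ x ∈ Icc t₁ t₂, φ x = φ t₁ := by
        apply constant_of_has_deriv_right_zero
          (hcont.mono (fun r hr => ht₁0.trans hr.1))
        intro x hx
        have hx0 : (0:ℝ) ≤ x := ht₁0.trans hx.1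
        have h1 : φ 0 / 2 ≤ φ x := by rw [← ht₁]; exact Mono t₁ x ht₁0 hx.1
        have h2 : φ x ≤ φ 0 / 4 := by rw [← ht₂]; exact Mono x t₂ hx0 hx.2.le
        have hdx := hODE x hx0
        rw [key (φ x) (by linarith) (by linarith), mul_zero] at hdx
        exact hdx.hasDerivWithinAt
      have := hconst t₂ ⟨ht12, le_rfl⟩
      rw [ht₁, ht₂] at this
      linarith
    · exfalso
      rw [hzero, Real.zero_rpow (neg_ne_zero.2 (by linarith))] at hφ0
      exact lt_irrefl 0 hφ0
    · exact hpos
  have hφpos : ∀ t, 0 ≤ t → 0 < φ t :=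
    fun t ht => lt_of_lt_of_le hφ0pos (Mono 0 t le_rfl ht)
  have hone_div : ∀ t, 0 ≤ t → 1 / φ t ^ β = φ t ^ (-β) := by
    intro t ht
    rw [Real.rpow_neg (hφpos t ht).le, one_div]
  have hxmem : ∀ t, 0 ≤ t → φ t ^ (-β) ∈ Icc (0:ℝ) r₀ := by
    intro t ht
    constructor
    · exact (Real.rpow_pos_of_pos (hφpos t ht) _).le
    · exact le_trans
        (Real.rpow_le_rpow_of_nonpos hφ0pos (Mono 0 t le_rfl ht) (by linarith)) hφ0r
  have hDnonneg : ∀ t, 0 ≤ t → 0 ≤ deriv hinv (φ t ^ (-β)) := by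
    intro t ht
    have h1 := hFnonneg t ht
    rw [hone_div t ht] at h1
    by_contra hD
    push_neg at hD
    exact absurd h1
      (not_le.2 (mul_neg_of_pos_of_neg (mul_pos hc (hφpos t ht)) hD))
  -- facts about Hstar
  have hbdd : ∀ p : ℝ, BddAbove ((fun y => p * y - hinv y) '' Icc 0 r₀) := by
    intro p
    exact (isCompact_Icc.image_of_continuousOn
      (((continuous_const.mul continuous_id).continuousOn).sub hC1.continuousOn)).bddAbove
  have hHnonneg : ∀ p : ℝ, 0 ≤ Hstar p := by
    intro p
    rw [hHstar]
    exact le_csSup (hbdd p) ⟨0, ⟨le_rfl, hr₀.le⟩, by simp [h0]⟩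
  have hHle : ∀ x ∈ Icc (0:ℝ) r₀, 0 ≤ deriv hinv x →
      Hstar (deriv hinv x) ≤ deriv hinv x * x := by
    intro x hx hp
    rw [hHstar]
    refine csSup_le ⟨deriv hinv x * 0 - hinv 0,
      mem_image_of_mem _ (⟨le_rfl, hr₀.le⟩ : (0:ℝ) ∈ Icc 0 r₀)⟩ ?_
    rintro z ⟨y, hy, rfl⟩
    by_cases hdiff : DifferentiableAt ℝ hinv x
    · rcases le_or_gt y x with hyx | hxy
      · have h1 : deriv hinv x * y ≤ deriv hinv x * x :=
          mul_le_mul_of_nonneg_left hyx hp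
        have h2 := hnonneg y hy
        simp only
        linarith
      · have hslope := hconv.convexOn.deriv_le_slope hx hy hxy hdiff
        rw [slope_def_field] at hslope
        have h3 : deriv hinv x * (y - x) ≤ hinv y - hinv x :=
          (le_div_iff₀ (sub_pos.2 hxy)).1 hslope
        rw [mul_sub] at h3
        have h4 := hnonneg x hx
        simp only
        linarith
    · rw [deriv_zero_of_not_differentiableAt hdiff]
      simp only [zero_mul, zero_sub, zero_mul]
      exact neg_nonpos.2 (hnonneg y hy)
  -- pointwise bound
  have hpt : ∀ s, 0 < s →
      φ s * Hstar (2 * C₁ * deriv φ s / (ε₀ * φ s)) ≤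
        2 * C₁ / ε₀ * (deriv φ s * φ s ^ (-β)) := by
    intro s hs
    have hs0 : (0:ℝ) ≤ s := hs.le
    have hφs := hφpos s hs0
    have hd := (hODE s hs0).deriv
    have hne1 : ε₀ ≠ 0 := ne_of_gt hε₀
    have hne2 : C₁ ≠ 0 := ne_of_gt hC₁
    have hne3 : φ s ≠ 0 := ne_of_gt hφs
    have harg : 2 * C₁ * deriv φ s / (ε₀ * φ s) = deriv hinv (φ s ^ (-β)) := by
      rw [hd, hone_div s hs0]
      field_simp
      try ring
    rw [harg]
    have hB := hHle (φ s ^ (-β)) (hxmem s hs0) (hDnonneg s hs0)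
    have h1 : φ s * Hstar (deriv hinv (φ s ^ (-β))) ≤
        φ s * (deriv hinv (φ s ^ (-β)) * φ s ^ (-β)) :=
      mul_le_mul_of_nonneg_left hB hφs.le
    have h2 : 2 * C₁ / ε₀ * (deriv φ s * φ s ^ (-β)) =
        φ s * (deriv hinv (φ s ^ (-β)) * φ s ^ (-β)) := by
      rw [hd, hone_div s hs0]
      field_simp
    linarith
  -- the comparison integral
  have hbne : (1:ℝ) - β ≠ 0 := by intro h; exact absurd (by linarith : β = 1) (by linarith)
  have hψder : ∀ s ∈ Ici (0:ℝ), HasDerivAt (fun r => φ r ^ (1-β) / (1-β))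
      (deriv φ s * φ s ^ (-β)) s := by
    intro s hs
    have hφs := hφpos s hs
    have h1 : HasDerivAt (fun y : ℝ => y ^ (1-β)) ((1-β) * φ s ^ (1-β-1)) (φ s) :=
      Real.hasDerivAt_rpow_const (Or.inl hφs.ne')
    have h2 := (h1.comp s (hODE s hs)).div_const (1-β)
    refine h2.congr_deriv ?_
    rw [(hODE s hs).deriv, show (1:ℝ)-β-1 = -β from by ring]
    field_simp
  have hψtend : Tendsto (fun r => φ r ^ (1-β) / (1-β)) atTop (𝓝 0) := by
    have h1 : Tendsto (fun y : ℝ => y ^ (1-β)) atTop (𝓝 0) := by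
      rw [show (1:ℝ) - β = -(β-1) from by ring]
      exact tendsto_rpow_neg_atTop (by linarith)
    have h2 := (h1.comp htend).div_const (1-β)
    simpa using h2
  have hg'nonneg : ∀ x ∈ Ioi (0:ℝ), 0 ≤ deriv φ x * φ x ^ (-β) := by
    intro x hx
    have hx0 : (0:ℝ) ≤ x := (le_of_lt hx)
    have hdpos : 0 ≤ deriv φ x := by
      rw [(hODE x hx0).deriv]; exact hFnonneg x hx0
    exact mul_nonneg hdpos (Real.rpow_pos_of_pos (hφpos x hx0) _).le
  have hint : IntegrableOn (fun s => deriv φ s * φ s ^ (-β)) (Ioi 0) :=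
    integrableOn_Ioi_deriv_of_nonneg' hψder hg'nonneg hψtend
  have hval : ∫ s in Ioi (0:ℝ), deriv φ s * φ s ^ (-β) = 0 - φ 0 ^ (1-β) / (1-β) := by
    simpa using integral_Ioi_of_hasDerivAt_of_nonneg' hψder hg'nonneg hψtend
  have hmono_int : (∫ s in Ioi (0:ℝ), φ s * Hstar (2 * C₁ * deriv φ s / (ε₀ * φ s))) ≤
      ∫ s in Ioi (0:ℝ), 2 * C₁ / ε₀ * (deriv φ s * φ s ^ (-β)) := by
    apply integral_mono_of_nonneg
    · filter_upwards [ae_restrict_mem measurableSet_Ioi] with s hs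
      exact mul_nonneg (hφpos s (le_of_lt hs)).le (hHnonneg _)
    · exact hint.const_mul _
    · filter_upwards [ae_restrict_mem measurableSet_Ioi] with s hs
      exact hpt s hs
  have hfinal : (∫ s in Ioi (0:ℝ), φ s * Hstar (2 * C₁ * deriv φ s / (ε₀ * φ s))) ≤
      2 * C₁ / ε₀ * (0 - φ 0 ^ (1-β) / (1-β)) := by
    rw [← hval, ← integral_const_mul]
    exact hmono_int
  have hfin2 := mul_le_mul_of_nonneg_left hfinal hc.le
  refine le_trans hfin2 (le_of_eq ?_)
  have hne1 : ε₀ ≠ 0 := ne_of_gt hε₀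
  have hne2 : C₁ ≠ 0 := ne_of_gt hC₁
  have hbne' : β - 1 ≠ 0 := by intro h; exact absurd (by linarith : β = 1) (by linarith)
  field_simp
  ring
end
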